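/- Let T be a finite rooted tree with a friendly labeling function L : G → 𝓛, and let e be an interior edge of T. If (l_1, m, n_1) and (l_2, m, n_2) are consistent labelings of T (with the same label m on the edge e), then (l_1, m, n_2) and (l_2, m, n_1) are also consistent labelings of T, and the quadratic binomial q_{(l_1,m,n_1)} q_{(l_2,m,n_2)} − q_{(l_1,m,n_2)} q_{(l_2,m,n_1)} lies in the toric ideal I_{T,L}. -/

import Mathlib

open MvPolynomial

attribute [local instance] Classical.propDecidable

set_option maxHeartbeats 1000000

/-- The set `Z_m ⊆ G^m` of tuples with `g_1 + ⋯ + g_{m-1} = g_m`. -/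
def ZSet (G : Type) [AddCommGroup G] (m : ℕ) : Set (Fin m → G) :=
  {g | (∑ i ∈ Finset.univ.filter fun i : Fin m => (i : ℕ) < m - 1, g i) =
       ∑ i ∈ Finset.univ.filter fun i : Fin m => ¬ (i : ℕ) < m - 1, g i}

/-- A labeling function `L : G → 𝓛` is `m`-friendly if for every tuple in `Z_m`, every
value with the same label at a coordinate can be realized at that coordinate by another
tuple in `Z_m` with the same label vector. -/
def IsMFriendly {G 𝓛 : Type} [AddCommGroup G] (L : G → 𝓛) (m : ℕ) : Prop :=
  ∀ g ∈ ZSet G m, ∀ i : Fin m, ∀ h : G, L h = L (g i) →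
    ∃ g' ∈ ZSet G m, (∀ j, L (g' j) = L (g j)) ∧ g' i = h

/-- A labeling function is friendly if it is `m`-friendly for all `m ≥ 3`. -/
def Friendly {G 𝓛 : Type} [AddCommGroup G] (L : G → 𝓛) : Prop :=
  ∀ m, 3 ≤ m → IsMFriendly L m

/-- A finite rooted tree, given by a parent function on a finite vertex set. -/
structure PhyloTree where
  V : Type
  fintypeV : Fintype V
  root : V
  parent : V → V
  parent_root : parent root = root
  reaches_root : ∀ v, ∃ n : ℕ, parent^[n] v = root

attribute [instance] PhyloTree.fintypeV

namespace PhyloTree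

variable (T : PhyloTree)

/-- A vertex is a leaf if it has no children. -/
def IsLeaf (v : T.V) : Prop := ∀ u, T.parent u = v → u = v

/-- The type of leaves of `T`. -/
def Leaf : Type := {v : T.V // T.IsLeaf v}

noncomputable instance : Fintype T.Leaf :=
  have : DecidablePred T.IsLeaf := Classical.decPred _
  Subtype.fintype _

/-- `u` is a (weak) descendant of `v`. -/
def Desc (u v : T.V) : Prop := ∃ n : ℕ, T.parent^[n] u = v

/-- The edges of `T` are indexed by its vertices: a vertex `v` indexes the edge from
`parent v` to `v`, and the root indexes the extra pendant root edge `e_r`.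
`leavesBelow v` is the set `Λ(e)` of leaves below the edge indexed by `v`. -/
noncomputable def leavesBelow (v : T.V) : Finset T.Leaf :=
  Finset.univ.filter fun l => T.Desc l.1 v

/-- An edge is interior if its lower endpoint is neither a leaf nor the root
(the latter excluding the pendant root edge). -/
def InteriorEdge (e : T.V) : Prop := ¬ T.IsLeaf e ∧ e ≠ T.root

/-- The edge set of the subtree `T_{e,-}`: the edge `e` together with all edges below it. -/
def Eminus (e : T.V) : Set T.V := {e' | T.Desc e' e}

/-- The edge set of the subtree `T_{e,+}`: the edge `e` together with all edges not in `T_{e,-}`. -/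
def Eplus (e : T.V) : Set T.V := {e' | e' = e ∨ ¬ T.Desc e' e}

theorem mem_Eminus_self (e : T.V) : e ∈ T.Eminus e := ⟨0, rfl⟩

theorem mem_Eplus_self (e : T.V) : e ∈ T.Eplus e := Or.inl rfl

variable {G 𝓛 : Type} [AddCommGroup G] [Fintype G]

/-- `g(e)`: the sum of the group elements at the leaves below the edge `e`. -/
noncomputable def gsum (g : T.Leaf → G) (e : T.V) : G := ∑ l ∈ T.leavesBelow e, g l

/-- The consistent labelings of the subtree with edge set `S`. -/
def consLab (L : G → 𝓛) (S : Set T.V) : Set (↥S → 𝓛) :=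
  Set.range fun g : T.Leaf → G => fun e' : ↥S => L (T.gsum g e'.1)

/-- The consistent labelings of the whole tree `T`, i.e. the image of `L^T`. -/
def consLabFull (L : G → 𝓛) : Set (T.V → 𝓛) :=
  Set.range fun g : T.Leaf → G => fun e : T.V => L (T.gsum g e)

/-- The toric ideal of the subtree with edge set `S` (in Fourier coordinates `q_λ`,
`λ` a consistent labeling): the kernel of the monomial map `q_λ ↦ ∏_e a^{(e)}_{λ(e)}`. -/
noncomputable def toricIdeal (L : G → 𝓛) (S : Set T.V) :
    Ideal (MvPolynomial ↥(T.consLab L S) ℂ) :=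
  RingHom.ker (aeval (R := ℂ)
    fun μ : ↥(T.consLab L S) => ∏ e' : ↥S, (X (e', μ.1 e') : MvPolynomial (↥S × 𝓛) ℂ))

/-- The toric ideal `I_{T,L}` of the tree `T`. -/
noncomputable def toricIdealFull (L : G → 𝓛) :
    Ideal (MvPolynomial ↥(T.consLabFull L) ℂ) :=
  RingHom.ker (aeval (R := ℂ)
    fun μ : ↥(T.consLabFull L) => ∏ e : T.V, (X (e, μ.1 e) : MvPolynomial (T.V × 𝓛) ℂ))

/-- Glue a labeling of `T_{e,-}` and a labeling of `T_{e,+}` into a labeling of `T`. -/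
noncomputable def glue (e : T.V) (μ : ↥(T.Eminus e) → 𝓛) (ν : ↥(T.Eplus e) → 𝓛) :
    T.V → 𝓛 :=
  fun e' => if h : T.Desc e' e then μ ⟨e', h⟩ else ν ⟨e', Or.inr h⟩

/-- `mix e λ₁ λ₂` agrees with `λ₁` on `T_{e,-}` and with `λ₂` on the rest of `T`. -/
noncomputable def mix (e : T.V) (f g : T.V → 𝓛) : T.V → 𝓛 :=
  fun e' => if T.Desc e' e then f e' else g e'


theorem desc_refl (v : T.V) : T.Desc v v := ⟨0, rfl⟩

theorem desc_trans {u v w : T.V} (h1 : T.Desc u v) (h2 : T.Desc v w) : T.Desc u w := by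
  obtain ⟨n, hn⟩ := h1; obtain ⟨m, hm⟩ := h2
  exact ⟨m + n, by rw [Function.iterate_add_apply, hn, hm]⟩

theorem iterate_root (n : ℕ) : T.parent^[n] T.root = T.root :=
  Function.iterate_fixed T.parent_root n

theorem desc_antisymm {u v : T.V} (h1 : T.Desc u v) (h2 : T.Desc v u) : u = v := by
  obtain ⟨n, hn⟩ := h1; obtain ⟨m, hm⟩ := h2
  rcases Nat.eq_zero_or_pos (m + n) with h0 | hpos
  · have hn0 : n = 0 := by omega
    subst hn0; exact hn
  · have hper : T.parent^[m + n] u = u := by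
      rw [Function.iterate_add_apply, hn, hm]
    have key : ∀ k : ℕ, T.parent^[(m + n) * k] u = u := by
      intro k
      induction k with
      | zero => simp
      | succ k ihk =>
        rw [Nat.mul_succ, Function.iterate_add_apply, hper]
        exact ihk
    obtain ⟨N, hN⟩ := T.reaches_root u
    have hge : N ≤ (m + n) * (N + 1) := by nlinarith
    have hM : T.parent^[(m + n) * (N + 1)] u = T.root := by
      rw [show (m + n) * (N + 1) = ((m + n) * (N + 1) - N) + N by omega,
        Function.iterate_add_apply, hN, T.iterate_root]
    have hroot : u = T.root := by rw [← key (N + 1), hM]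
    have hroot' : v = T.root := by rw [← hn, hroot, T.iterate_root]
    rw [hroot, hroot']

theorem desc_comparable {u a b : T.V} (ha : T.Desc u a) (hb : T.Desc u b) :
    T.Desc a b ∨ T.Desc b a := by
  obtain ⟨n, hn⟩ := ha; obtain ⟨m, hm⟩ := hb
  rcases le_total n m with h | h
  · left
    refine ⟨m - n, ?_⟩
    rw [← hn, ← Function.iterate_add_apply, Nat.sub_add_cancel h]
    exact hm
  · right
    refine ⟨n - m, ?_⟩
    rw [← hm, ← Function.iterate_add_apply, Nat.sub_add_cancel h]
    exact hn

theorem leaf_desc {v : T.V} (hv : T.IsLeaf v) : ∀ (n : ℕ) (u : T.V), T.parent^[n] u = v → u = v := by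
  intro n
  induction n with
  | zero => intro u h; exact h
  | succ n ihn =>
    intro u h
    rw [Function.iterate_succ_apply] at h
    exact hv u (ihn _ h)

/-- The children of a vertex. -/
noncomputable def children (v : T.V) : Finset T.V :=
  Finset.univ.filter fun c => T.parent c = v ∧ c ≠ v

theorem mem_children {v c : T.V} : c ∈ T.children v ↔ T.parent c = v ∧ c ≠ v := by
  simp [children]

theorem child_desc {v c : T.V} (hc : c ∈ T.children v) : T.Desc c v := by
  rw [T.mem_children] at hc
  exact ⟨1, by simpa using hc.1⟩

theorem child_eq {v c1 c2 u : T.V} (hc1 : c1 ∈ T.children v) (hc2 : c2 ∈ T.children v)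
    (h1 : T.Desc u c1) (h2 : T.Desc u c2) : c1 = c2 := by
  rw [T.mem_children] at hc1 hc2
  have key : ∀ a b : T.V, T.parent a = v → T.parent b = v → b ≠ v → T.Desc a b → a = b := by
    intro a b ha hb hb' hd
    obtain ⟨j, hj⟩ := hd
    match j, hj with
    | 0, hj => exact hj
    | (j+1), hj =>
      rw [Function.iterate_succ_apply, ha] at hj
      exact absurd (T.desc_antisymm ⟨j, hj⟩ (⟨1, by simpa using hb⟩ : T.Desc b v)).symm hb'
  rcases T.desc_comparable h1 h2 with h | h
  · exact key c1 c2 hc1.1 hc2.1 hc2.2 h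
  · exact (key c2 c1 hc2.1 hc1.1 hc1.2 h).symm

theorem exists_child_above' : ∀ (m : ℕ) (u v : T.V), T.parent^[m] u = v → u ≠ v →
    ∃ c ∈ T.children v, T.Desc u c := by
  intro m
  induction m with
  | zero => intro u v hm hne; exact absurd hm hne
  | succ m ihm =>
    intro u v hm hne
    rw [Function.iterate_succ_apply] at hm
    by_cases hp : T.parent u = v
    · exact ⟨u, T.mem_children.2 ⟨hp, hne⟩, T.desc_refl u⟩
    · obtain ⟨c, hc1, hc2⟩ := ihm (T.parent u) v hm hp
      exact ⟨c, hc1, T.desc_trans ⟨1, by simp⟩ hc2⟩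

theorem exists_child_above {u v : T.V} (h : T.Desc u v) (hne : u ≠ v) :
    ∃ c ∈ T.children v, T.Desc u c := by
  obtain ⟨m, hm⟩ := h
  exact T.exists_child_above' m u v hm hne

theorem mem_leavesBelow {v : T.V} {l : T.Leaf} : l ∈ T.leavesBelow v ↔ T.Desc l.1 v := by
  simp [leavesBelow]

theorem gsum_congr {G : Type} [AddCommGroup G] {g g' : T.Leaf → G} {v : T.V}
    (h : ∀ l ∈ T.leavesBelow v, g' l = g l) : T.gsum g' v = T.gsum g v :=
  Finset.sum_congr rfl h

theorem leavesBelow_eq_biUnion {v : T.V} (hv : ¬ T.IsLeaf v) :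
    T.leavesBelow v = (T.children v).biUnion (fun c => T.leavesBelow c) := by
  ext l
  simp only [Finset.mem_biUnion, T.mem_leavesBelow]
  constructor
  · intro hd
    have hlv : l.1 ≠ v := by
      intro h; exact hv (h ▸ l.2)
    obtain ⟨m, hm⟩ := hd
    exact T.exists_child_above' m l.1 v hm hlv
  · rintro ⟨c, hc, hd⟩
    exact T.desc_trans hd (T.child_desc hc)

theorem children_disj {v : T.V} :
    (↑(T.children v) : Set T.V).PairwiseDisjoint (fun c => T.leavesBelow c) := by
  intro c1 hc1 c2 hc2 hne
  dsimp [Function.onFun]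
  refine Finset.disjoint_left.2 fun l hl1 hl2 => hne ?_
  exact T.child_eq (Finset.mem_coe.1 hc1) (Finset.mem_coe.1 hc2)
    (T.mem_leavesBelow.1 hl1) (T.mem_leavesBelow.1 hl2)

theorem gsum_children {G : Type} [AddCommGroup G] (g : T.Leaf → G) {v : T.V}
    (hv : ¬ T.IsLeaf v) : T.gsum g v = ∑ c ∈ T.children v, T.gsum g c := by
  unfold gsum
  rw [T.leavesBelow_eq_biUnion hv, Finset.sum_biUnion T.children_disj]

theorem child_measure {v c : T.V} (hc : c ∈ T.children v) :
    (Finset.univ.filter fun u => T.Desc u c).card <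
      (Finset.univ.filter fun u => T.Desc u v).card := by
  have hsub : (Finset.univ.filter fun u => T.Desc u c) ⊆
      (Finset.univ.filter fun u => T.Desc u v) := by
    intro u hu
    simp only [Finset.mem_filter] at *
    exact ⟨hu.1, T.desc_trans hu.2 (T.child_desc hc)⟩
  have hvmem : v ∈ (Finset.univ.filter fun u => T.Desc u v) :=
    Finset.mem_filter.2 ⟨Finset.mem_univ v, T.desc_refl v⟩
  have hvnot : v ∉ (Finset.univ.filter fun u => T.Desc u c) := by
    simp only [Finset.mem_filter, Finset.mem_univ, true_and]
    intro hd
    exact (T.mem_children.1 hc).2 (T.desc_antisymm (T.child_desc hc) hd)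
  exact Finset.card_lt_card ((Finset.ssubset_iff_of_subset hsub).2 ⟨v, hvmem, hvnot⟩)

/-- Key adjustment lemma: the leaf assignments below a vertex `v` can be modified, without
changing any label below `v` nor any value outside the subtree of `v`, so that the sum at
`v` becomes any prescribed value with the same label. -/
theorem adjust {G 𝓛 : Type} [AddCommGroup G] [Fintype G] (L : G → 𝓛) (hL : Friendly L) :
    ∀ (n : ℕ) (v : T.V), (Finset.univ.filter fun u => T.Desc u v).card ≤ n →
    ∀ (g : T.Leaf → G) (h : G), L h = L (T.gsum g v) →
    ∃ g' : T.Leaf → G, (∀ l : T.Leaf, ¬ T.Desc l.1 v → g' l = g l) ∧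
      T.gsum g' v = h ∧ ∀ e', T.Desc e' v → L (T.gsum g' e') = L (T.gsum g e') := by
  intro n
  induction n with
  | zero =>
    intro v hv
    exfalso
    have hm : v ∈ Finset.univ.filter fun u => T.Desc u v :=
      Finset.mem_filter.2 ⟨Finset.mem_univ v, T.desc_refl v⟩
    have := Finset.card_pos.2 ⟨v, hm⟩
    omega
  | succ n ih =>
    intro v hv g h hlab
    by_cases hleaf : T.IsLeaf v
    · -- leaf case
      have hlb : T.leavesBelow v = {⟨v, hleaf⟩} := by
        ext l
        rw [T.mem_leavesBelow]
        constructor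
        · intro hd
          obtain ⟨m, hm⟩ := hd
          exact Finset.mem_singleton.2 (Subtype.ext (T.leaf_desc hleaf m l.1 hm))
        · intro hx
          obtain rfl := Finset.mem_singleton.1 hx
          exact T.desc_refl v
      refine ⟨Function.update g ⟨v, hleaf⟩ h, ?_, ?_, ?_⟩
      · intro l hl
        apply Function.update_of_ne
        intro hlv
        exact hl (by rw [hlv]; exact T.desc_refl v)
      · unfold gsum
        rw [hlb]
        exact (Finset.sum_singleton _ _).trans (Function.update_self _ _ _)
      · intro e' he'
        obtain ⟨m, hm⟩ := he'
        have hev : e' = v := T.leaf_desc hleaf m e' hm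
        subst hev
        have h1 : T.gsum (Function.update g ⟨e', hleaf⟩ h) e' = h := by
          unfold gsum
          rw [hlb]
          exact (Finset.sum_singleton _ _).trans (Function.update_self _ _ _)
        rw [h1]
        exact hlab
    · -- interior case
      set C := T.children v with hC
      have hCne : C.Nonempty := by
        rw [IsLeaf] at hleaf
        push_neg at hleaf
        obtain ⟨u, hu1, hu2⟩ := hleaf
        exact ⟨u, T.mem_children.2 ⟨hu1, hu2⟩⟩
      have hsum : T.gsum g v = ∑ c ∈ C, T.gsum g c := T.gsum_children g hleaf
      have inner : ∀ s : Finset T.V, s ⊆ C → ∀ t : T.V → G,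
          (∀ c ∈ s, L (t c) = L (T.gsum g c)) →
          ∃ g' : T.Leaf → G,
            (∀ l : T.Leaf, (∀ c ∈ s, ¬ T.Desc l.1 c) → g' l = g l) ∧
            (∀ c ∈ s, T.gsum g' c = t c) ∧
            (∀ c ∈ s, ∀ e', T.Desc e' c → L (T.gsum g' e') = L (T.gsum g e')) := by
        intro s
        induction s using Finset.induction_on with
        | empty =>
          intro _ t _
          exact ⟨g, fun _ _ => rfl, by simp, by simp⟩
        | insert c s' hcs ihs =>
          intro hsub t ht
          obtain ⟨g'', hu'', hs'', hl''⟩ := ihs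
            (fun x hx => hsub (Finset.mem_insert_of_mem hx)) t
            (fun c' hc' => ht c' (Finset.mem_insert_of_mem hc'))
          have hcC : c ∈ C := hsub (Finset.mem_insert_self c s')
          have hdisj : ∀ (l : T.Leaf), T.Desc l.1 c → ∀ c' ∈ s', ¬ T.Desc l.1 c' := by
            intro l hl c' hc' hl'
            apply hcs
            rw [T.child_eq hcC (hsub (Finset.mem_insert_of_mem hc')) hl hl']
            exact hc'
          have hmeas : (Finset.univ.filter fun u => T.Desc u c).card ≤ n := by
            have h1 := T.child_measure hcC
            omega
          have hgc : T.gsum g'' c = T.gsum g c :=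
            T.gsum_congr (fun l hl => hu'' l (hdisj l (T.mem_leavesBelow.1 hl)))
          obtain ⟨g', hu', hs', hl'⟩ := ih c hmeas g'' (t c)
            (by rw [hgc]; exact ht c (Finset.mem_insert_self c s'))
          refine ⟨g', ?_, ?_, ?_⟩
          · intro l hl
            rw [hu' l (hl c (Finset.mem_insert_self c s')),
              hu'' l (fun c' hc' => hl c' (Finset.mem_insert_of_mem hc'))]
          · intro c' hc'
            rcases Finset.mem_insert.1 hc' with rfl | hc'
            · exact hs'
            · have h1 : T.gsum g' c' = T.gsum g'' c' :=
                T.gsum_congr (fun l hl =>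
                  hu' l (fun hd => hdisj l hd c' hc' (T.mem_leavesBelow.1 hl)))
              rw [h1]
              exact hs'' c' hc'
          · intro c' hc' e' he'
            rcases Finset.mem_insert.1 hc' with rfl | hc'
            · rw [hl' e' he']
              exact congrArg L (T.gsum_congr (fun l hl =>
                hu'' l (hdisj l (T.desc_trans (T.mem_leavesBelow.1 hl) he'))))
            · have h1 : T.gsum g' e' = T.gsum g'' e' :=
                T.gsum_congr (fun l hl =>
                  hu' l (fun hd => hdisj l hd c' hc'
                    (T.desc_trans (T.mem_leavesBelow.1 hl) he')))
              rw [h1]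
              exact hl'' c' hc' e' he'
      -- produce the targets t
      obtain ⟨t, ht1, ht2⟩ : ∃ t : T.V → G,
          (∀ c ∈ C, L (t c) = L (T.gsum g c)) ∧ (∑ c ∈ C, t c) = h := by
        by_cases hcard : C.card = 1
        · obtain ⟨c, hc⟩ := Finset.card_eq_one.1 hcard
          refine ⟨fun _ => h, ?_, ?_⟩
          · intro c' hc'
            rw [hc, Finset.mem_singleton] at hc'
            subst hc'
            rw [hlab, hsum, hc, Finset.sum_singleton]
          · rw [hc, Finset.sum_singleton]
        · have hk2 : 2 ≤ C.card := by
            have := Finset.card_pos.2 hCne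
            omega
          set e := C.equivFin with he
          have hfilter_not : (Finset.univ.filter fun i : Fin (C.card + 1) =>
              ¬ (i : ℕ) < (C.card + 1) - 1) = {Fin.last C.card} := by
            ext i
            simp only [Finset.mem_filter, Finset.mem_univ, true_and, Finset.mem_singleton]
            constructor
            · intro hi
              have := i.isLt
              exact Fin.ext (by rw [Fin.val_last]; omega)
            · rintro rfl
              rw [Fin.val_last]
              omega
          have hkey : ∀ f : Fin (C.card + 1) → G,
              (∑ i ∈ Finset.univ.filter fun i : Fin (C.card + 1) =>
                (i : ℕ) < (C.card + 1) - 1, f i) = ∑ j : Fin C.card, f j.castSucc := by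
            intro f
            have h1 := Finset.sum_filter_add_sum_filter_not Finset.univ
              (fun i : Fin (C.card + 1) => (i : ℕ) < (C.card + 1) - 1) f
            rw [hfilter_not, Finset.sum_singleton, Fin.sum_univ_castSucc] at h1
            exact add_right_cancel h1
          set tup : Fin (C.card + 1) → G :=
            Fin.snoc (fun j : Fin C.card => T.gsum g (↑(e.symm j))) (T.gsum g v) with htup
          have hZ : tup ∈ ZSet G (C.card + 1) := by
            simp only [ZSet, Set.mem_setOf_eq]
            rw [hkey, hfilter_not, Finset.sum_singleton]
            have hlast : tup (Fin.last C.card) = T.gsum g v := by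
              rw [htup, Fin.snoc_last]
            rw [hlast]
            calc ∑ j : Fin C.card, tup j.castSucc
                = ∑ j : Fin C.card, T.gsum g (↑(e.symm j)) := by
                  refine Finset.sum_congr rfl fun j _ => ?_
                  rw [htup, Fin.snoc_castSucc]
              _ = ∑ c : ↥C, T.gsum g (↑c) := Equiv.sum_comp e.symm (fun c => T.gsum g (↑c))
              _ = ∑ c ∈ C, T.gsum g c := by
                  rw [← Finset.sum_attach C (fun c => T.gsum g c), Finset.univ_eq_attach]
              _ = T.gsum g v := hsum.symm
          have hlastlab : L h = L (tup (Fin.last C.card)) := by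
            rw [htup, Fin.snoc_last]
            exact hlab
          obtain ⟨tup', hZ', htupL, htupLast⟩ :=
            hL (C.card + 1) (by omega) tup hZ (Fin.last C.card) h hlastlab
          refine ⟨fun c' => if hc' : c' ∈ C then tup' (Fin.castSucc (e ⟨c', hc'⟩)) else 0,
            ?_, ?_⟩
          · intro c' hc'
            simp only [dif_pos hc']
            have h1 := htupL (Fin.castSucc (e ⟨c', hc'⟩))
            rw [htup, Fin.snoc_castSucc, Equiv.symm_apply_apply] at h1
            exact h1
          · simp only [ZSet, Set.mem_setOf_eq] at hZ'
            rw [hkey, hfilter_not, Finset.sum_singleton, htupLast] at hZ'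
            rw [← hZ']
            rw [← Finset.sum_attach C
              (fun c' => if hc' : c' ∈ C then tup' (Fin.castSucc (e ⟨c', hc'⟩)) else 0),
              ← Finset.univ_eq_attach]
            exact Fintype.sum_equiv e _ _ fun x => dif_pos x.2
      obtain ⟨g', hu', hs', hl'⟩ := inner C (Finset.Subset.refl C) t ht1
      refine ⟨g', ?_, ?_, ?_⟩
      · intro l hl
        exact hu' l (fun c hc hd => hl (T.desc_trans hd (T.child_desc hc)))
      · rw [T.gsum_children g' hleaf, ← ht2]
        exact Finset.sum_congr rfl (fun c hc => hs' c hc)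
      · intro e' he'
        by_cases hev : e' = v
        · subst hev
          have h1 : T.gsum g' e' = h := by
            rw [T.gsum_children g' hleaf, ← ht2]
            exact Finset.sum_congr rfl (fun c hc => hs' c hc)
          rw [h1]
          exact hlab

        · obtain ⟨c, hc1, hc2⟩ := T.exists_child_above he' hev
          exact hl' c hc1 e' hc2

/-- The mixed labeling is consistent. -/
theorem mix_mem {G 𝓛 : Type} [AddCommGroup G] [Fintype G]
    (L : G → 𝓛) (hL : Friendly L) {e : T.V}
    {l1 l2 : T.V → 𝓛} (h1 : l1 ∈ T.consLabFull L) (h2 : l2 ∈ T.consLabFull L)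
    (hagree : l1 e = l2 e) : T.mix e l1 l2 ∈ T.consLabFull L := by
  obtain ⟨g1, hg1⟩ := h1
  obtain ⟨g2, hg2⟩ := h2
  have hlab : L (T.gsum g2 e) = L (T.gsum g1 e) := by
    rw [show L (T.gsum g2 e) = l2 e from congrFun hg2 e,
      show L (T.gsum g1 e) = l1 e from congrFun hg1 e]
    exact hagree.symm
  obtain ⟨g1', hu, hs, hl⟩ := T.adjust L hL
    (Finset.univ.filter fun u => T.Desc u e).card e le_rfl g1 (T.gsum g2 e) hlab
  refine ⟨fun l => if T.Desc l.1 e then g1' l else g2 l, ?_⟩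
  funext e'
  show L (T.gsum (fun l => if T.Desc l.1 e then g1' l else g2 l) e') = T.mix e l1 l2 e'
  by_cases hd : T.Desc e' e
  · have hq : T.gsum (fun l => if T.Desc l.1 e then g1' l else g2 l) e' = T.gsum g1' e' :=
      T.gsum_congr fun l hl' =>
        if_pos (T.desc_trans (T.mem_leavesBelow.1 hl') hd)
    rw [hq, hl e' hd]
    simp only [PhyloTree.mix, if_pos hd]
    exact congrFun hg1 e'
  · have hq : T.gsum (fun l => if T.Desc l.1 e then g1' l else g2 l) e' = T.gsum g2 e' := by
      unfold gsum
      rw [← Finset.sum_filter_add_sum_filter_not (T.leavesBelow e')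
        (fun l => T.Desc l.1 e) (fun l => if T.Desc l.1 e then g1' l else g2 l),
        ← Finset.sum_filter_add_sum_filter_not (T.leavesBelow e')
        (fun l => T.Desc l.1 e) g2]
      congr 1
      · have hset : (T.leavesBelow e').filter (fun l => T.Desc l.1 e) =
            if T.Desc e e' then T.leavesBelow e else ∅ := by
          by_cases hee : T.Desc e e'
          · rw [if_pos hee]
            ext l
            simp only [Finset.mem_filter, T.mem_leavesBelow]
            constructor
            · intro hx; exact hx.2
            · intro hx; exact ⟨T.desc_trans hx hee, hx⟩
          · rw [if_neg hee]
            ext l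
            simp only [Finset.mem_filter, T.mem_leavesBelow, Finset.notMem_empty,
              iff_false, not_and]
            intro ha hb
            rcases T.desc_comparable ha hb with hco | hco
            · exact hd hco
            · exact hee hco
        rw [hset]
        by_cases hee : T.Desc e e'
        · rw [if_pos hee]
          have hx1 : ∑ l ∈ T.leavesBelow e,
              (if T.Desc l.1 e then g1' l else g2 l) = T.gsum g1' e :=
            Finset.sum_congr rfl fun l hl' => if_pos (T.mem_leavesBelow.1 hl')
          rw [hx1, hs]
          rfl
        · rw [if_neg hee]
          simp
      · refine Finset.sum_congr rfl fun l hl' => ?_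
        rw [if_neg]
        simp only [Finset.mem_filter] at hl'
        exact hl'.2
    rw [hq]
    simp only [PhyloTree.mix, if_neg hd]
    exact congrFun hg2 e'

end PhyloTree

namespace PhyloTree
variable (T : PhyloTree)

end PhyloTree

/-- **Lemma (the quadrics `Quad(e,T)` are invariants).** For a friendly labeling `L` and an
interior edge `e`, if `(l₁,m,n₁)` and `(l₂,m,n₂)` are consistent labelings of `T` sharing the
label `m` on `e`, then the swapped labelings `(l₁,m,n₂)` and `(l₂,m,n₁)` are consistent, and
the quadratic binomial `q_{(l₁,m,n₁)} q_{(l₂,m,n₂)} − q_{(l₁,m,n₂)} q_{(l₂,m,n₁)}` lies in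
the toric ideal `I_{T,L}`. -/
theorem quad_mem_toricIdeal (T : PhyloTree) {G 𝓛 : Type} [AddCommGroup G] [Fintype G]
    (L : G → 𝓛) (hL : Friendly L) (e : T.V) (he : T.InteriorEdge e)
    (l1 l2 : T.V → 𝓛) (h1 : l1 ∈ T.consLabFull L) (h2 : l2 ∈ T.consLabFull L)
    (hagree : l1 e = l2 e) :
    ∃ (h3 : T.mix e l1 l2 ∈ T.consLabFull L) (h4 : T.mix e l2 l1 ∈ T.consLabFull L),
      (X (⟨l1, h1⟩ : ↥(T.consLabFull L)) * X (⟨l2, h2⟩ : ↥(T.consLabFull L)) -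
        X (⟨T.mix e l1 l2, h3⟩ : ↥(T.consLabFull L)) *
        X (⟨T.mix e l2 l1, h4⟩ : ↥(T.consLabFull L)))
        ∈ T.toricIdealFull L := by
  have h3 : T.mix e l1 l2 ∈ T.consLabFull L := T.mix_mem L hL h1 h2 hagree
  have h4 : T.mix e l2 l1 ∈ T.consLabFull L := T.mix_mem L hL h2 h1 hagree.symm
  refine ⟨h3, h4, ?_⟩
  rw [PhyloTree.toricIdealFull, RingHom.mem_ker, map_sub, map_mul, map_mul]
  simp only [aeval_X]
  rw [← Finset.prod_mul_distrib, ← Finset.prod_mul_distrib, sub_eq_zero]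
  refine Finset.prod_congr rfl fun e' _ => ?_
  by_cases hd : T.Desc e' e
  · simp [PhyloTree.mix, hd]
  · simp only [PhyloTree.mix, if_neg hd]
    exact mul_comm _ _
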